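/- For every integer s ≥ 0, the space (ℙ_s)² of ℝ²-valued polynomial vector fields of degree ≤ s decomposes as the direct sum of rot⊥(ℙ_{s+1}) := {(∂q/∂x₂, -∂q/∂x₁) : q ∈ ℙ_{s+1}} and x·ℙ_{s-1} := {x ↦ p(x)·x : p ∈ ℙ_{s-1}}, where ℙ_{-1} = {0}. -/

import Mathlib

open MvPolynomial

noncomputable section

/-- Polynomials in two variables. -/
abbrev P2 := MvPolynomial (Fin 2) ℝ

/-- `ℙ_n`, polynomials of total degree ≤ n, with `ℙ_n = {0}` for `n < 0`. -/
def Pdeg2 (n : ℤ) : Submodule ℝ P2 :=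
  if n < 0 then ⊥ else restrictTotalDegree (Fin 2) ℝ n.toNat

/-- `(ℙ_s)²` as a submodule of vector-valued polynomials. -/
def Ps2vec (s : ℕ) : Submodule ℝ (Fin 2 → P2) :=
  Submodule.pi Set.univ (fun _ => Pdeg2 s)

def pd2 (i : Fin 2) : P2 →ₗ[ℝ] P2 := (pderiv i : Derivation ℝ P2 P2).toLinearMap

/-- `rot⊥ q = (∂q/∂x₂, -∂q/∂x₁)` as a linear map. -/
def rotPerpLM : P2 →ₗ[ℝ] (Fin 2 → P2) := LinearMap.pi ![pd2 1, -pd2 0]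

/-- `p ↦ (x ↦ p(x)·x)` as a linear map. -/
def xMulLM : P2 →ₗ[ℝ] (Fin 2 → P2) :=
  LinearMap.pi (fun i => LinearMap.mulLeft ℝ (X i))



lemma degD_eq (d : Fin 2 →₀ ℕ) : (d.sum fun _ e => e) = d 0 + d 1 := by
  rw [Finsupp.sum_fintype _ _ (fun _ => rfl), Fin.sum_univ_two]

lemma mem_Pdeg2_monomial {d : Fin 2 →₀ ℕ} {r : ℝ} {n : ℤ}
    (h : (d 0 : ℤ) + d 1 ≤ n) : monomial d r ∈ Pdeg2 n := by
  have hn : ¬ n < 0 := by omega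
  rw [Pdeg2, if_neg hn, mem_restrictTotalDegree]
  refine le_trans (totalDegree_monomial_le d r) ?_
  rw [show (d.sum fun _ => id) = d.sum fun _ e => e from rfl, degD_eq]; omega

lemma mem_Pdeg2_totalDegree {p : P2} {n : ℤ} (hn : ¬ n < 0)
    (h : p ∈ Pdeg2 n) : p.totalDegree ≤ n.toNat := by
  rw [Pdeg2, if_neg hn, mem_restrictTotalDegree] at h; exact h

lemma deg_le_of_mem {p : P2} {n : ℤ} (h : p ∈ Pdeg2 n) {d : Fin 2 →₀ ℕ}
    (hd : d ∈ p.support) : (d 0 : ℤ) + d 1 ≤ n := by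
  by_cases hn : n < 0
  · rw [Pdeg2, if_pos hn] at h
    simp only [Submodule.mem_bot] at h
    subst h; simp at hd
  · have := le_trans (le_totalDegree hd) (mem_Pdeg2_totalDegree hn h)
    rw [degD_eq] at this; omega

lemma pderiv_mem {p : P2} {n : ℤ} (i : Fin 2) (h : p ∈ Pdeg2 n) :
    pderiv i p ∈ Pdeg2 (n - 1) := by
  rw [p.as_sum, map_sum]
  refine Submodule.sum_mem _ fun d hd => ?_
  rw [pderiv_monomial]
  rcases Nat.eq_zero_or_pos (d i) with h0 | h0
  · rw [h0]; simp
  · have hdn := deg_le_of_mem h hd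
    refine mem_Pdeg2_monomial ?_
    rw [Finsupp.tsub_apply, Finsupp.tsub_apply]
    fin_cases i <;> simp [Finsupp.single_apply] at h0 ⊢ <;> omega

lemma X_mul_mem {p : P2} {n : ℤ} (i : Fin 2) (h : p ∈ Pdeg2 n) :
    X i * p ∈ Pdeg2 (n + 1) := by
  by_cases hn : n < 0
  · rw [Pdeg2, if_pos hn] at h; simp only [Submodule.mem_bot] at h
    subst h; rw [mul_zero]; exact zero_mem _
  rw [p.as_sum, Finset.mul_sum]
  refine Submodule.sum_mem _ fun d hd => ?_
  have hdn := deg_le_of_mem h hd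
  rw [X, monomial_mul, one_mul]
  refine mem_Pdeg2_monomial ?_
  rw [Finsupp.add_apply, Finsupp.add_apply]
  fin_cases i <;> simp [Finsupp.single_apply] <;> omega

def Sc (c : ℕ → ℝ) : P2 →ₗ[ℝ] P2 :=
  (Finsupp.lsum ℝ fun d => c (d 0 + d 1) • (monomial d : ℝ →ₗ[ℝ] P2)) ∘ₗ
    (AddMonoidAlgebra.coeffLinearEquiv ℝ).toLinearMap

lemma Sc_monomial (c : ℕ → ℝ) (d : Fin 2 →₀ ℕ) (r : ℝ) :
    Sc c (monomial d r) = c (d 0 + d 1) • monomial d r := by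
  rw [Sc, ← single_eq_monomial]
  simp [AddMonoidAlgebra.coeffLinearEquiv, single_eq_monomial]

lemma Sc_mem {p : P2} {n : ℤ} (c : ℕ → ℝ) (h : p ∈ Pdeg2 n) :
    Sc c p ∈ Pdeg2 n := by
  rw [p.as_sum, map_sum]
  refine Submodule.sum_mem _ fun d hd => ?_
  rw [Sc_monomial]
  exact Submodule.smul_mem _ _ (mem_Pdeg2_monomial (deg_le_of_mem h hd))

def NOp : P2 →ₗ[ℝ] P2 :=
  LinearMap.mulLeft ℝ (X 0) ∘ₗ pd2 0 + LinearMap.mulLeft ℝ (X 1) ∘ₗ pd2 1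

def EOp : P2 →ₗ[ℝ] P2 := NOp + 2 • LinearMap.id

lemma X_mul_pderiv_monomial (i : Fin 2) (d : Fin 2 →₀ ℕ) (r : ℝ) :
    X i * pderiv i (monomial d r) = (d i : ℝ) • monomial d r := by
  rw [pderiv_monomial]
  rcases Nat.eq_zero_or_pos (d i) with h | h
  · simp [h]
  · rw [X, monomial_mul, one_mul]
    rw [show Finsupp.single i 1 + (d - Finsupp.single i 1) = d by
      ext j
      rw [Finsupp.add_apply, Finsupp.tsub_apply]
      rcases eq_or_ne j i with rfl | hj
      · simp [Finsupp.single_apply]; omega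
      · simp [Finsupp.single_eq_of_ne' (Ne.symm hj)]]
    rw [smul_monomial, mul_comm, smul_eq_mul]

lemma NOp_monomial (d : Fin 2 →₀ ℕ) (r : ℝ) :
    NOp (monomial d r) = ((d 0 + d 1 : ℕ) : ℝ) • monomial d r := by
  simp only [NOp, LinearMap.add_apply, LinearMap.comp_apply, LinearMap.mulLeft_apply]
  show X 0 * pderiv 0 (monomial d r) + X 1 * pderiv 1 (monomial d r) = _
  rw [X_mul_pderiv_monomial, X_mul_pderiv_monomial, ← add_smul]
  push_cast; ring_nf

lemma EOp_monomial (d : Fin 2 →₀ ℕ) (r : ℝ) :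
    EOp (monomial d r) = ((d 0 + d 1 : ℕ) + 2 : ℝ) • monomial d r := by
  simp only [EOp, LinearMap.add_apply, LinearMap.smul_apply, LinearMap.id_apply,
    NOp_monomial]
  module

lemma Sc_EOp : Sc (fun k => ((k : ℝ) + 2)⁻¹) ∘ₗ EOp = LinearMap.id := by
  apply MvPolynomial.linearMap_ext
  intro d; refine LinearMap.ext fun r => ?_
  simp only [LinearMap.comp_apply, LinearMap.id_apply, LinearMap.id_coe, id_eq,
    EOp_monomial, map_smul, Sc_monomial, smul_smul]
  rw [mul_inv_cancel₀ (by positivity), one_smul]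

lemma EOp_Sc : EOp ∘ₗ Sc (fun k => ((k : ℝ) + 2)⁻¹) = LinearMap.id := by
  apply MvPolynomial.linearMap_ext
  intro d; refine LinearMap.ext fun r => ?_
  simp only [LinearMap.comp_apply, LinearMap.id_apply, LinearMap.id_coe, id_eq,
    Sc_monomial, map_smul, EOp_monomial, smul_smul]
  rw [inv_mul_cancel₀ (by positivity), one_smul]

lemma Sc_idN : Sc (fun k => ((k : ℝ) + 1)⁻¹) ∘ₗ (LinearMap.id + NOp) = LinearMap.id := by
  apply MvPolynomial.linearMap_ext
  intro d; refine LinearMap.ext fun r => ?_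
  simp only [LinearMap.comp_apply, LinearMap.add_apply, LinearMap.id_apply,
    LinearMap.id_coe, id_eq, NOp_monomial]
  rw [show monomial d r + ((d 0 + d 1 : ℕ) : ℝ) • monomial d r
      = (((d 0 + d 1 : ℕ) : ℝ) + 1) • monomial d r by rw [add_smul, one_smul, add_comm]]
  rw [map_smul, Sc_monomial, smul_smul, mul_inv_cancel₀ (by positivity), one_smul]

lemma pd2_apply (i : Fin 2) (p : P2) : pd2 i p = pderiv i p := rfl

lemma pderiv_Sc (i : Fin 2) (c : ℕ → ℝ) :
    pd2 i ∘ₗ Sc c = Sc (fun k => c (k + 1)) ∘ₗ pd2 i := by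
  apply MvPolynomial.linearMap_ext
  intro d; refine LinearMap.ext fun r => ?_
  simp only [LinearMap.comp_apply]
  rw [Sc_monomial, map_smul]
  simp only [pd2_apply, pderiv_monomial, Sc_monomial]
  rcases Nat.eq_zero_or_pos (d i) with h | h
  · simp [h]
  · congr 1
    congr 1
    rw [Finsupp.tsub_apply, Finsupp.tsub_apply]
    fin_cases i <;> simp [Finsupp.single_apply] at h ⊢ <;> omega


def divOp : (Fin 2 → P2) →ₗ[ℝ] P2 :=
  pd2 0 ∘ₗ LinearMap.proj 0 + pd2 1 ∘ₗ LinearMap.proj 1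

lemma divOp_apply (v : Fin 2 → P2) : divOp v = pderiv 0 (v 0) + pderiv 1 (v 1) := rfl

lemma rotPerpLM_apply_zero (q : P2) : rotPerpLM q 0 = pderiv 1 q := rfl
lemma rotPerpLM_apply_one (q : P2) : rotPerpLM q 1 = -pderiv 0 q := rfl
lemma xMulLM_apply (p : P2) (i : Fin 2) : xMulLM p i = X i * p := rfl

lemma pderiv_comm' (p : P2) : pderiv 0 (pderiv 1 p) = pderiv 1 (pderiv 0 p) := by
  have : pd2 0 ∘ₗ pd2 1 = pd2 1 ∘ₗ pd2 0 := by
    apply MvPolynomial.linearMap_ext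
    intro d; refine LinearMap.ext fun r => ?_
    simp only [LinearMap.comp_apply, pd2_apply, pderiv_monomial]
    rw [Finsupp.tsub_apply, Finsupp.tsub_apply]
    simp only [Finsupp.single_apply]
    norm_num
    rw [show d - Finsupp.single 1 1 - Finsupp.single 0 1
        = d - Finsupp.single 0 1 - Finsupp.single 1 1 by
      rw [tsub_tsub, tsub_tsub, add_comm]]
    ring_nf
  exact LinearMap.congr_fun this p

lemma divOp_rotPerp (q : P2) : divOp (rotPerpLM q) = 0 := by
  rw [divOp_apply, rotPerpLM_apply_zero, rotPerpLM_apply_one, map_neg, pderiv_comm']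
  ring

lemma divOp_xMul (p : P2) : divOp (xMulLM p) = EOp p := by
  rw [divOp_apply, xMulLM_apply, xMulLM_apply]
  rw [pderiv_mul, pderiv_mul, pderiv_X_self, pderiv_X_self]
  show _ = NOp p + 2 • p
  rw [show NOp p = X 0 * pderiv 0 p + X 1 * pderiv 1 p from rfl, two_smul]
  ring

lemma pderiv_Sc' (i : Fin 2) (c : ℕ → ℝ) (p : P2) :
    pderiv i (Sc c p) = Sc (fun k => c (k + 1)) (pderiv i p) := by
  have := LinearMap.congr_fun (pderiv_Sc i c) p
  simpa [pd2_apply] using this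

lemma rot_of_divFree (w : Fin 2 → P2) (hw : divOp w = 0) :
    rotPerpLM (Sc (fun k => (k : ℝ)⁻¹) (X 0 * (-(w 1)) + X 1 * (w 0))) = w := by
  have hdiv : pderiv 1 (w 1) = - pderiv 0 (w 0) := by
    rw [divOp_apply] at hw; linear_combination hw
  have hc : (fun k : ℕ => ((k : ℝ) + 1)⁻¹) = fun k : ℕ => (((k + 1 : ℕ) : ℝ))⁻¹ := by
    funext k; push_cast; ring_nf
  have idN : ∀ p : P2, Sc (fun k => ((k : ℝ) + 1)⁻¹) ((LinearMap.id + NOp : P2 →ₗ[ℝ] P2) p) = p :=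
    fun p => by simpa using LinearMap.congr_fun Sc_idN p
  have hX10 : pderiv 1 (X 0 : P2) = 0 := by rw [pderiv_X]; simp
  have hX01 : pderiv 0 (X 1 : P2) = 0 := by rw [pderiv_X]; simp
  have key0 : pderiv 1 (X 0 * (-(w 1)) + X 1 * (w 0)) = ((LinearMap.id + NOp : P2 →ₗ[ℝ] P2) (w 0)) := by
    show _ = w 0 + (X 0 * pderiv 0 (w 0) + X 1 * pderiv 1 (w 0))
    rw [map_add, pderiv_mul, pderiv_mul, pderiv_X_self, map_neg, hX10, hdiv]
    ring
  have key1 : pderiv 0 (X 0 * (-(w 1)) + X 1 * (w 0)) = -(((LinearMap.id + NOp : P2 →ₗ[ℝ] P2)) (w 1)) := by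
    show _ = -(w 1 + (X 0 * pderiv 0 (w 1) + X 1 * pderiv 1 (w 1)))
    rw [map_add, pderiv_mul, pderiv_mul, pderiv_X_self, map_neg, hX01, hdiv]
    ring
  funext i
  fin_cases i
  · show rotPerpLM _ 0 = w 0
    rw [rotPerpLM_apply_zero, pderiv_Sc', key0, ← hc, idN]
  · show rotPerpLM _ 1 = w 1
    rw [rotPerpLM_apply_one, pderiv_Sc', key1, map_neg, ← hc, idN, neg_neg]


lemma EOp_inj {p : P2} (h : EOp p = 0) : p = 0 := by
  have := LinearMap.congr_fun Sc_EOp p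
  simp only [LinearMap.comp_apply, LinearMap.id_apply, h, map_zero] at this
  exact this.symm

/-- `(ℙ_s)² = rot⊥(ℙ_{s+1}) ⊕ x·ℙ_{s-1}` (internal direct sum). -/
theorem stmt2 (s : ℕ) :
    (Submodule.map rotPerpLM (Pdeg2 (s + 1))) ⊓ (Submodule.map xMulLM (Pdeg2 (s - 1))) = ⊥ ∧
    (Submodule.map rotPerpLM (Pdeg2 (s + 1))) ⊔ (Submodule.map xMulLM (Pdeg2 (s - 1))) =
      Ps2vec s := by
  constructor
  · rw [eq_bot_iff]
    rintro v ⟨⟨q, hq, hqv⟩, ⟨p, hp, hpv⟩⟩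
    have hdv : divOp v = 0 := by rw [← hqv]; exact divOp_rotPerp q
    have hE : EOp p = 0 := by rw [← divOp_xMul, hpv, hdv]
    have hp0 : p = 0 := EOp_inj hE
    rw [Submodule.mem_bot, ← hpv, hp0, map_zero]
  · apply le_antisymm
    · apply sup_le
      · rintro v ⟨q, hq, rfl⟩
        intro i _
        fin_cases i
        · show rotPerpLM q 0 ∈ Pdeg2 (s : ℤ)
          rw [rotPerpLM_apply_zero, ← pd2_apply]
          have := pderiv_mem 1 hq
          rw [show (s : ℤ) + 1 - 1 = s by ring] at this
          exact this
        · show rotPerpLM q 1 ∈ Pdeg2 (s : ℤ)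
          rw [rotPerpLM_apply_one]
          refine neg_mem ?_
          have := pderiv_mem 0 hq
          rw [show (s : ℤ) + 1 - 1 = s by ring] at this
          exact this
      · rintro v ⟨p, hp, rfl⟩
        intro i _
        rw [xMulLM_apply]
        have := X_mul_mem i hp
        rw [show (s : ℤ) - 1 + 1 = s by ring] at this
        exact this
    · intro v hv
      have hvmem : ∀ i, v i ∈ Pdeg2 s := fun i => hv i (Set.mem_univ i)
      set p : P2 := Sc (fun k => ((k : ℝ) + 2)⁻¹) (divOp v) with hpdef
      have hdvmem : divOp v ∈ Pdeg2 ((s : ℤ) - 1) := by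
        rw [divOp_apply]
        exact add_mem (pderiv_mem 0 (hvmem 0)) (pderiv_mem 1 (hvmem 1))
      have hp : p ∈ Pdeg2 ((s : ℤ) - 1) := Sc_mem _ hdvmem
      set w : Fin 2 → P2 := v - xMulLM p with hwdef
      have hwmem : ∀ i, w i ∈ Pdeg2 s := by
        intro i
        refine sub_mem (hvmem i) ?_
        rw [xMulLM_apply]
        have := X_mul_mem i hp
        rw [show (s : ℤ) - 1 + 1 = s by ring] at this
        exact this
      have hdw : divOp w = 0 := by
        rw [hwdef, map_sub, divOp_xMul, hpdef]
        have := LinearMap.congr_fun EOp_Sc (divOp v)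
        simp only [LinearMap.comp_apply, LinearMap.id_apply] at this
        rw [this, sub_self]
      set q : P2 := Sc (fun k => (k : ℝ)⁻¹) (X 0 * (-(w 1)) + X 1 * (w 0)) with hqdef
      have hq : q ∈ Pdeg2 ((s : ℤ) + 1) := by
        refine Sc_mem _ (add_mem ?_ ?_)
        · exact X_mul_mem 0 (neg_mem (hwmem 1))
        · exact X_mul_mem 1 (hwmem 0)
      have hrot : rotPerpLM q = w := rot_of_divFree w hdw
      refine Submodule.mem_sup.mpr ⟨rotPerpLM q, ⟨q, hq, rfl⟩, xMulLM p, ⟨p, hp, rfl⟩, ?_⟩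
      rw [hrot, hwdef]; abel
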